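/- Let G be a countable group such that for every g ∈ G with g ≠ 1 there exist d : ℕ → ℕ and maps α_m : G → U(d m) with ‖α_m(qh) − α_m(q)α_m(h)‖ → 0 for all q, h ∈ G and with ‖α_m(g) − 1‖ not converging to 0. Then G is an MF-group, i.e., there exist e : ℕ → ℕ and maps ω_m : G → U(e m) with ‖ω_m(qh) − ω_m(q)ω_m(h)‖ → 0 for all q, h ∈ G and with ‖ω_m(g) − 1‖ not converging to 0 for every g ≠ 1. -/

import Mathlib

open Filter

/-- The operator norm (as operators on `ℂⁿ` with the `ℓ²` norm) of a complex matrix. -/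
noncomputable def matOpNorm {N : Type*} [Fintype N] [DecidableEq N]
    (A : Matrix N N ℂ) : ℝ :=
  ‖Matrix.toEuclideanCLM (𝕜 := ℂ) (n := N) A‖

/-- A sequence of maps `αₘ : G → U(d m)` is an asymptotic representation if
`‖αₘ(gh) − αₘ(g)αₘ(h)‖ → 0` for all `g h : G`. -/
def IsAsymptoticRep {G : Type*} [Group G] (d : ℕ → ℕ)
    (α : ∀ m : ℕ, G → Matrix.unitaryGroup (Fin (d m)) ℂ) : Prop :=
  ∀ g h : G,
    Tendsto (fun m : ℕ =>
      matOpNorm ((α m (g * h) : Matrix (Fin (d m)) (Fin (d m)) ℂ) -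
        (α m g : Matrix (Fin (d m)) (Fin (d m)) ℂ) *
        (α m h : Matrix (Fin (d m)) (Fin (d m)) ℂ)))
      atTop (nhds 0)

/-- A group is MF if it admits an asymptotic representation `(αₘ)` such that, for every
`g ≠ 1`, `‖αₘ(g) − 1‖` does not converge to `0`. -/
def IsMFGroup (G : Type*) [Group G] : Prop :=
  ∃ (d : ℕ → ℕ) (α : ∀ m : ℕ, G → Matrix.unitaryGroup (Fin (d m)) ℂ),
    IsAsymptoticRep d α ∧
    ∀ g : G, g ≠ 1 →
      ¬ Tendsto (fun m : ℕ =>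
          matOpNorm ((α m g : Matrix (Fin (d m)) (Fin (d m)) ℂ) - 1))
        atTop (nhds 0)

theorem stmt5 (G : Type*) [Group G] [Countable G]
    (hres : ∀ g : G, g ≠ 1 →
      ∃ (d : ℕ → ℕ) (α : ∀ m : ℕ, G → Matrix.unitaryGroup (Fin (d m)) ℂ),
        IsAsymptoticRep d α ∧
        ¬ Tendsto (fun m : ℕ =>
            matOpNorm ((α m g : Matrix (Fin (d m)) (Fin (d m)) ℂ) - 1))
          atTop (nhds 0)) :
    IsMFGroup G := by
  classical
  -- Step 1: for every g, an asymptotic rep which (if g ≠ 1) uniformly separates g from 1.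
  have key : ∀ g : G, ∃ (d : ℕ → ℕ) (α : ∀ m : ℕ, G → Matrix.unitaryGroup (Fin (d m)) ℂ),
      IsAsymptoticRep d α ∧ (g ≠ 1 → ∃ ε > (0:ℝ), ∀ m,
        ε ≤ matOpNorm ((α m g : Matrix (Fin (d m)) (Fin (d m)) ℂ) - 1)) := by
    intro g
    by_cases hg : g = 1
    · refine ⟨fun _ => 1, fun _ _ => 1, ?_, fun h => absurd hg h⟩
      intro q h
      have h0 : matOpNorm (0 : Matrix (Fin 1) (Fin 1) ℂ) = 0 := by
        simp [matOpNorm]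
      simp only [OneMemClass.coe_one, mul_one, sub_self, h0]
      exact tendsto_const_nhds
    · obtain ⟨d, α, hα, hnt⟩ := hres g hg
      have hfreq : ∃ ε > (0:ℝ), ∃ᶠ m in atTop,
          ε ≤ matOpNorm ((α m g : Matrix (Fin (d m)) (Fin (d m)) ℂ) - 1) := by
        by_contra hcon
        push_neg at hcon
        apply hnt
        rw [Metric.tendsto_atTop]
        intro ε hε
        have h1 := hcon ε hε
        simp only [not_le, Filter.eventually_atTop] at h1
        obtain ⟨N, hN⟩ := h1
        refine ⟨N, fun n hn => ?_⟩
        have hnn : 0 ≤ matOpNorm ((α n g : Matrix (Fin (d n)) (Fin (d n)) ℂ) - 1) :=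
          norm_nonneg _
        rw [Real.dist_eq, sub_zero, abs_of_nonneg hnn]
        exact hN n hn
      obtain ⟨ε, hε, hfr⟩ := hfreq
      obtain ⟨φ, hφ, hφP⟩ := Filter.extraction_of_frequently_atTop hfr
      refine ⟨d ∘ φ, fun m => α (φ m), ?_, fun _ => ⟨ε, hε, hφP⟩⟩
      intro q h
      exact (hα q h).comp hφ.tendsto_atTop
  choose d α hα hsep using key
  -- Step 2: enumerations
  obtain ⟨s, hs⟩ := exists_surjective_nat G
  obtain ⟨p, hp⟩ := exists_surjective_nat (G × G)
  -- which representation to use at time m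
  set k : ℕ → G := fun m => s (Nat.unpair m).1 with hk
  -- Step 3: choose good indices
  have hN : ∀ m : ℕ, ∃ n : ℕ, ∀ j ≤ m,
      matOpNorm ((α (k m) n ((p j).1 * (p j).2) :
          Matrix (Fin (d (k m) n)) (Fin (d (k m) n)) ℂ) -
        (α (k m) n (p j).1 : Matrix (Fin (d (k m) n)) (Fin (d (k m) n)) ℂ) *
        (α (k m) n (p j).2 : Matrix (Fin (d (k m) n)) (Fin (d (k m) n)) ℂ))
        < 1 / (m + 1) := by
    intro m
    have hpos : (0:ℝ) < 1 / (m + 1) := by positivity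
    have : ∀ᶠ n in atTop, ∀ j ∈ Finset.range (m + 1),
        matOpNorm ((α (k m) n ((p j).1 * (p j).2) :
            Matrix (Fin (d (k m) n)) (Fin (d (k m) n)) ℂ) -
          (α (k m) n (p j).1 : Matrix (Fin (d (k m) n)) (Fin (d (k m) n)) ℂ) *
          (α (k m) n (p j).2 : Matrix (Fin (d (k m) n)) (Fin (d (k m) n)) ℂ))
          < 1 / (m + 1) := by
      rw [Filter.eventually_all_finset]
      intro j _
      exact (hα (k m) (p j).1 (p j).2).eventually (eventually_lt_nhds hpos) |>.mono
        (fun n hn => hn)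
    obtain ⟨n, hn⟩ := this.exists
    exact ⟨n, fun j hj => hn j (Finset.mem_range.mpr (Nat.lt_succ_of_le hj))⟩
  choose N hNs using hN
  -- Step 4: the combined asymptotic representation
  refine ⟨fun m => d (k m) (N m), fun m => α (k m) (N m), ?_, ?_⟩
  · intro q h
    obtain ⟨j, hj⟩ := hp (q, h)
    have hub : ∀ m ≥ j, matOpNorm ((α (k m) (N m) (q * h) :
        Matrix (Fin (d (k m) (N m))) (Fin (d (k m) (N m))) ℂ) -
        (α (k m) (N m) q : Matrix (Fin (d (k m) (N m))) (Fin (d (k m) (N m))) ℂ) *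
        (α (k m) (N m) h : Matrix (Fin (d (k m) (N m))) (Fin (d (k m) (N m))) ℂ))
        ≤ 1 / (m + 1) := by
      intro m hm
      have := hNs m j hm
      rw [hj] at this
      exact le_of_lt this
    refine squeeze_zero' (Filter.Eventually.of_forall fun m => norm_nonneg _)
      (Filter.eventually_atTop.mpr ⟨j, hub⟩) ?_
    exact tendsto_one_div_add_atTop_nhds_zero_nat
  · intro g hg
    obtain ⟨ε, hε, hεs⟩ := hsep g hg
    obtain ⟨i, hi⟩ := hs g
    intro hT
    have hev := (hT.eventually (eventually_lt_nhds hε))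
    rw [Filter.eventually_atTop] at hev
    obtain ⟨M, hM⟩ := hev
    have hkm : k (Nat.pair i M) = g := by
      simp [hk, Nat.unpair_pair, hi]
    have h1 := hM (Nat.pair i M) (Nat.right_le_pair i M)
    subst hkm
    exact absurd h1 (not_lt.mpr (hεs (N (Nat.pair i M))))
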